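/- Let r be a positive integer and let f(t) = ∑_j f_j t^j be a generalized polynomial with nonnegative real coefficients and exponents in (1/r)ℤ≥0. For n ∈ ℤ>0 let f*_n(t) := Ψ(f(t)^n), where Ψ rounds up exponents. Then for every real number x with 0 < x ≤ 1 and every n ≥ 1: f*_n(x) ≤ f(x)^n ≤ x^(1/r - 1) · f*_n(x). -/

import Mathlib

open Finsupp

/-- Evaluation of a generalized polynomial `∑ c_j t^j` (a finitely supported
function `ℚ →₀ ℝ`, with convolution product) at a positive real `x`, using
real exponentiation. -/
noncomputable def gpEval (f : AddMonoidAlgebra ℝ ℚ) (x : ℝ) : ℝ :=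
  f.coeff.sum fun j c => c * x ^ (j : ℝ)

/-- The linear rounding operator `Ψ` with `Ψ(t^j) = t^⌈j⌉`. -/
noncomputable def gpPsi (f : AddMonoidAlgebra ℝ ℚ) : AddMonoidAlgebra ℝ ℚ :=
  AddMonoidAlgebra.ofCoeff (Finsupp.mapDomain (fun j => (⌈j⌉ : ℚ)) f.coeff)

noncomputable def gpEvalHom (x : ℝ) (hx : 0 < x) : AddMonoidAlgebra ℝ ℚ →ₐ[ℝ] ℝ :=
  AddMonoidAlgebra.lift ℝ ℝ ℚ
    { toFun := fun j => x ^ ((Multiplicative.toAdd j : ℚ) : ℝ)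
      map_one' := by simp
      map_mul' := fun a b => by
        show x ^ (((Multiplicative.toAdd a + Multiplicative.toAdd b : ℚ)) : ℝ) = _
        push_cast
        rw [Real.rpow_add hx] }

lemma gpEval_eq (f : AddMonoidAlgebra ℝ ℚ) (x : ℝ) (hx : 0 < x) :
    gpEval f x = gpEvalHom x hx f := by
  rw [gpEvalHom, AddMonoidAlgebra.lift_apply]
  simp [gpEval, smul_eq_mul]

lemma gpEval_pow (f : AddMonoidAlgebra ℝ ℚ) (x : ℝ) (hx : 0 < x) (n : ℕ) :
    gpEval (f ^ n) x = gpEval f x ^ n := by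
  rw [gpEval_eq _ _ hx, gpEval_eq _ _ hx, map_pow]

lemma coeff_mul_nonneg (f g : AddMonoidAlgebra ℝ ℚ) (hf : ∀ j, 0 ≤ f.coeff j)
    (hg : ∀ j, 0 ≤ g.coeff j) : ∀ j, 0 ≤ (f * g).coeff j := by
  intro j
  rw [AddMonoidAlgebra.mul_apply]
  refine Finset.sum_nonneg fun a _ => Finset.sum_nonneg fun b _ => ?_
  show (0:ℝ) ≤ if a + b = j then f.coeff a * g.coeff b else 0
  split
  · exact mul_nonneg (hf _) (hg _)
  · exact le_refl _

lemma coeff_pow_nonneg (f : AddMonoidAlgebra ℝ ℚ) (hf : ∀ j, 0 ≤ f.coeff j) (n : ℕ) :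
    ∀ j, 0 ≤ (f ^ n).coeff j := by
  induction n with
  | zero =>
    intro j
    rw [pow_zero, AddMonoidAlgebra.one_def, AddMonoidAlgebra.coeff_single, Finsupp.single_apply]
    split <;> norm_num
  | succ k ih =>
    rw [pow_succ]
    exact coeff_mul_nonneg _ _ ih hf

lemma support_pow_exp (r : ℕ) (f : AddMonoidAlgebra ℝ ℚ)
    (hexp : ∀ j ∈ f.coeff.support, ∃ i : ℕ, j = (i : ℚ) / r) (n : ℕ) :
    ∀ j ∈ (f ^ n).coeff.support, ∃ i : ℕ, j = (i : ℚ) / r := by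
  induction n with
  | zero =>
    intro j hj
    rw [pow_zero, AddMonoidAlgebra.one_def, AddMonoidAlgebra.coeff_single] at hj
    have := Finsupp.support_single_subset hj
    simp only [Finset.mem_singleton] at this
    exact ⟨0, by simp [this]⟩
  | succ k ih =>
    intro j hj
    rw [pow_succ] at hj
    have := AddMonoidAlgebra.support_coeff_mul_subset (f ^ k) f hj
    rw [Finset.mem_add] at this
    obtain ⟨a, ha, b, hb, hab⟩ := this
    obtain ⟨i₁, h1⟩ := ih a ha
    obtain ⟨i₂, h2⟩ := hexp b hb
    exact ⟨i₁ + i₂, by rw [← hab, h1, h2]; push_cast; ring⟩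

theorem stmt_3 (r : ℕ) (hr : 0 < r) (f : AddMonoidAlgebra ℝ ℚ)
    (hexp : ∀ j ∈ f.coeff.support, ∃ i : ℕ, j = (i : ℚ) / r)
    (hpos : ∀ j, 0 ≤ f.coeff j)
    (x : ℝ) (hx0 : 0 < x) (hx1 : x ≤ 1) (n : ℕ) (hn : 1 ≤ n) :
    gpEval (gpPsi (f ^ n)) x ≤ gpEval f x ^ n ∧
      gpEval f x ^ n ≤ x ^ (1 / (r : ℝ) - 1) * gpEval (gpPsi (f ^ n)) x := by
  have hr' : (0:ℚ) < (r:ℚ) := by exact_mod_cast hr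
  set g := f ^ n with hg
  have hgpos : ∀ j, 0 ≤ g.coeff j := coeff_pow_nonneg f hpos n
  have hgexp := support_pow_exp r f hexp n
  have epow : gpEval f x ^ n = gpEval g x := (gpEval_pow f x hx0 n).symm
  have epsi : gpEval (gpPsi g) x = ∑ j ∈ g.coeff.support, g.coeff j * x ^ ((⌈j⌉ : ℚ) : ℝ) := by
    unfold gpEval gpPsi
    rw [AddMonoidAlgebra.coeff_ofCoeff, Finsupp.sum_mapDomain_index (by intro b; ring) (by intro b m1 m2; ring)]
    rfl
  have eg : gpEval g x = ∑ j ∈ g.coeff.support, g.coeff j * x ^ (j : ℝ) := rfl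
  -- ceiling bounds
  have hle : ∀ j ∈ g.coeff.support, (j : ℝ) ≤ ((⌈j⌉ : ℚ) : ℝ) := by
    intro j _
    exact_mod_cast Int.le_ceil j
  have hge : ∀ j ∈ g.coeff.support, ((⌈j⌉ : ℚ) : ℝ) + (1 / (r:ℝ) - 1) ≤ (j : ℝ) := by
    intro j hj
    obtain ⟨i, hi⟩ := hgexp j hj
    have h1 : (⌈j⌉ : ℚ) < j + 1 := Int.ceil_lt_add_one j
    have h2 : (⌈j⌉ : ℤ) * r < i + r := by
      have : (⌈j⌉ : ℚ) * r < ((i : ℚ) + r) := by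
        calc (⌈j⌉ : ℚ) * r < (j + 1) * r := by
              exact mul_lt_mul_of_pos_right h1 hr'
          _ = (i : ℚ) + r := by rw [hi]; field_simp
      exact_mod_cast this
    have h3 : (⌈j⌉ : ℤ) * r ≤ i + r - 1 := by omega
    have h4 : (⌈j⌉ : ℚ) ≤ j + 1 - 1 / r := by
      have hd : (⌈j⌉ : ℚ) ≤ ((i : ℚ) + r - 1) / r := by
        rw [le_div_iff₀ hr']; exact_mod_cast h3
      have heq : j + 1 - 1 / r = ((i : ℚ) + r - 1) / r := by
        rw [hi]; field_simp
      rw [heq]; exact hd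
    have h5 : ((⌈j⌉ : ℚ) : ℝ) ≤ (j : ℝ) + 1 - 1 / r := by
      have := (Rat.cast_le (K := ℝ)).mpr h4
      push_cast at this ⊢
      linarith
    linarith
  constructor
  · rw [epow, epsi, eg]
    refine Finset.sum_le_sum fun j hj => ?_
    exact mul_le_mul_of_nonneg_left
      (Real.rpow_le_rpow_of_exponent_ge hx0 hx1 (hle j hj)) (hgpos j)
  · rw [epow, epsi, eg, Finset.mul_sum]
    refine Finset.sum_le_sum fun j hj => ?_
    have : x ^ (1 / (r:ℝ) - 1) * (g.coeff j * x ^ ((⌈j⌉:ℚ) : ℝ))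
        = g.coeff j * x ^ (((⌈j⌉:ℚ) : ℝ) + (1 / (r:ℝ) - 1)) := by
      rw [Real.rpow_add hx0]; ring
    rw [this]
    exact mul_le_mul_of_nonneg_left
      (Real.rpow_le_rpow_of_exponent_ge hx0 hx1 (hge j hj)) (hgpos j)
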